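/- In the setting of the binary AdaBoost recursion — P finite nonempty, d₁ a probability distribution on P, y : P → {−1,1}, h_k : P → {−1,1}, α_k ∈ ℝ, Z_k = Σ_p d_k(p)·exp(−α_k·y(p)·h_k(p)) > 0, d_{k+1}(p) = d_k(p)·exp(−α_k·y(p)·h_k(p))/Z_k — the total weighted exponential loss equals the product of the normalizers: Σ_{p∈P} d₁(p)·exp(−y(p)·F_t(p)) = ∏_{k=1}^t Z_k, where F_t(p) = Σ_{k=1}^t α_k·h_k(p). -/

import Mathlib

lemma adaboost_aux {α : Type*} (P : Finset α) (y : α → ℝ) (h : ℕ → α → ℝ) (a : ℕ → ℝ)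
    (d : ℕ → α → ℝ) (Z : ℕ → ℝ) :
    ∀ t : ℕ, (∀ k, 1 ≤ k → k ≤ t → 0 < Z k) →
    (∀ k, 1 ≤ k → k ≤ t → ∀ p ∈ P,
      d (k + 1) p = d k p * Real.exp (-(a k) * (y p * h k p)) / Z k) →
    ∀ p ∈ P, d (t + 1) p * ∏ k ∈ Finset.Icc 1 t, Z k =
      d 1 p * Real.exp (-(y p * ∑ k ∈ Finset.Icc 1 t, a k * h k p)) := by
  intro t
  induction t with
  | zero => intro _ _ p hp; simp
  | succ s ih =>
    intro hZpos hdrec p hp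
    have hZne : Z (s + 1) ≠ 0 := (hZpos (s + 1) (by omega) le_rfl).ne'
    have h1 : 1 ≤ s + 1 := by omega
    rw [Finset.prod_Icc_succ_top h1, Finset.sum_Icc_succ_top h1,
      hdrec (s + 1) (by omega) le_rfl p hp]
    have := ih (fun k h1 h2 => hZpos k h1 (by omega))
      (fun k h1 h2 => hdrec k h1 (by omega)) p hp
    field_simp
    rw [show d (s + 1) p * Real.exp (-(a (s + 1) * y p * h (s + 1) p)) *
          ∏ k ∈ Finset.Icc 1 s, Z k =
        d (s + 1) p * (∏ k ∈ Finset.Icc 1 s, Z k) *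
          Real.exp (-(a (s + 1) * y p * h (s + 1) p)) by ring,
      this, mul_assoc, ← Real.exp_add]
    congr 2
    ring


/-- In the binary AdaBoost recursion, the total weighted exponential loss equals the
product of the normalizers:
`Σ_p d₁(p)·exp(−y(p)·F_t(p)) = ∏_{k=1}^t Z_k` where `F_t(p) = Σ_{k=1}^t α_k h_k(p)`. -/
theorem adaboost_exp_loss_eq_prod_normalizers {α : Type*} (P : Finset α) (hP : P.Nonempty)
    (y : α → ℝ) (hy : ∀ p ∈ P, y p = 1 ∨ y p = -1)
    (t : ℕ) (h : ℕ → α → ℝ)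
    (hh : ∀ k, 1 ≤ k → k ≤ t → ∀ p ∈ P, h k p = 1 ∨ h k p = -1)
    (a : ℕ → ℝ)
    (d : ℕ → α → ℝ) (hd0 : ∀ p ∈ P, 0 ≤ d 1 p) (hd1 : ∑ p ∈ P, d 1 p = 1)
    (Z : ℕ → ℝ)
    (hZ : ∀ k, 1 ≤ k → k ≤ t →
      Z k = ∑ p ∈ P, d k p * Real.exp (-(a k) * (y p * h k p)))
    (hZpos : ∀ k, 1 ≤ k → k ≤ t → 0 < Z k)
    (hdrec : ∀ k, 1 ≤ k → k ≤ t → ∀ p ∈ P,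
      d (k + 1) p = d k p * Real.exp (-(a k) * (y p * h k p)) / Z k) :
    ∑ p ∈ P, d 1 p * Real.exp (-(y p * ∑ k ∈ Finset.Icc 1 t, a k * h k p)) =
      ∏ k ∈ Finset.Icc 1 t, Z k := by
  have aux := adaboost_aux P y h a d Z t hZpos hdrec
  have hsum1 : ∑ p ∈ P, d (t + 1) p = 1 := by
    cases t with
    | zero => exact hd1
    | succ s =>
      have : ∑ p ∈ P, d (s + 1 + 1) p
          = ∑ p ∈ P, d (s + 1) p * Real.exp (-(a (s + 1)) * (y p * h (s + 1) p)) / Z (s + 1) :=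
        Finset.sum_congr rfl (fun p hp => hdrec (s + 1) (by omega) le_rfl p hp)
      rw [this, ← Finset.sum_div, ← hZ (s + 1) (by omega) le_rfl,
        div_self (hZpos (s + 1) (by omega) le_rfl).ne']
  calc ∑ p ∈ P, d 1 p * Real.exp (-(y p * ∑ k ∈ Finset.Icc 1 t, a k * h k p))
      = ∑ p ∈ P, d (t + 1) p * ∏ k ∈ Finset.Icc 1 t, Z k :=
        Finset.sum_congr rfl (fun p hp => (aux p hp).symm)
    _ = (∑ p ∈ P, d (t + 1) p) * ∏ k ∈ Finset.Icc 1 t, Z k := by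
        rw [Finset.sum_mul]
    _ = ∏ k ∈ Finset.Icc 1 t, Z k := by rw [hsum1, one_mul]
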